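/- arXiv:1311.6656 — 2 statements merged into one kernel-verified Lean document; each statement's English description precedes it below -/
import Mathlib

section
/- Let T be the b-adic map on [0,1) and let R₂(t) = ⋂_N ⋃_{n≥N} ⋃_{w ∈ {0,...,b-1}^n} {x ∈ I_n(w) : |T^n x − x| < b^{-tn}}, where I_n(w) is the b-adic cylinder of order n. Then for every s > 1/(1+t), the s-dimensional Hausdorff measure of R₂(t) is zero; hence dim_H R₂(t) ≤ 1/(1+t). -/
open Filter MeasureTheory
open scoped ENNReal NNReal Topology

/-- The `b`-adic cylinder of order `n` determined by the digit word `w`. -/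
def badicCyl (b n : ℕ) (w : Fin n → Fin b) : Set ℝ :=
  Set.Ico (∑ i : Fin n, (w i : ℝ) / (b : ℝ) ^ ((i : ℕ) + 1))
    (∑ i : Fin n, (w i : ℝ) / (b : ℝ) ^ ((i : ℕ) + 1) + ((b : ℝ) ^ n)⁻¹)

/-- The set `R₂(t) = ⋂_N ⋃_{n ≥ N} ⋃_w {x ∈ I_n(w) : |T^n x − x| < b^{-tn}}` for the
`b`-adic map `T x = bx mod 1`. -/
def badicR2 (b : ℕ) (t : ℝ) : Set ℝ :=
  ⋂ N : ℕ, ⋃ (n : ℕ) (_ : N ≤ n) (w : Fin n → Fin b),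
    {x ∈ badicCyl b n w |
      |(fun y : ℝ => Int.fract ((b : ℝ) * y))^[n] x - x| < (b : ℝ) ^ (-(t * (n : ℝ)))}

def badicEset (b : ℕ) (t : ℝ) (n : ℕ) (w : Fin n → Fin b) : Set ℝ :=
  {x ∈ badicCyl b n w |
    |(fun y : ℝ => Int.fract ((b : ℝ) * y))^[n] x - x| < (b : ℝ) ^ (-(t * (n : ℝ)))}

lemma fract_iterate (b : ℕ) : ∀ (n : ℕ) (x : ℝ),
    (fun y : ℝ => Int.fract ((b : ℝ) * y))^[n] (Int.fract x) = Int.fract ((b : ℝ) ^ n * x) := by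
  intro n
  induction n with
  | zero => intro x; simp
  | succ n ih =>
    intro x
    rw [Function.iterate_succ_apply]
    have h1 : Int.fract ((b : ℝ) * Int.fract x) = Int.fract ((b : ℝ) * x) := by
      have h2 : (b : ℝ) * Int.fract x = (b : ℝ) * x - ((b * ⌊x⌋ : ℤ) : ℝ) := by
        rw [Int.fract]; push_cast; ring
      rw [h2, Int.fract_sub_intCast]
    rw [h1, ih]
    congr 1
    ring

lemma badicEset_diam (b : ℕ) (hb : 2 ≤ b) (t : ℝ) (ht : 0 ≤ t) (m : ℕ) (hm : 1 ≤ m)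
    (w : Fin m → Fin b) :
    EMetric.diam (badicEset b t m w) ≤ ENNReal.ofReal (4 * (b : ℝ) ^ (-(1 + t) * (m : ℝ))) := by
  have hb0 : (0 : ℝ) < b := by positivity
  have hb1 : (1 : ℝ) < b := by exact_mod_cast hb
  have hbm : (2 : ℝ) ≤ (b : ℝ) ^ m := by
    calc (2 : ℝ) ≤ (b : ℝ) := by exact_mod_cast hb
    _ ≤ (b : ℝ) ^ m := le_self_pow₀ hb1.le (by omega)
  set a : ℝ := ∑ i : Fin m, (w i : ℝ) / (b : ℝ) ^ ((i : ℕ) + 1) with ha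
  set r : ℝ := (b : ℝ) ^ (-(t * (m : ℝ))) with hrdef
  have hr : 0 < r := Real.rpow_pos_of_pos hb0 _
  set c : ℤ := ∑ i : Fin m, (w i : ℤ) * (b : ℤ) ^ (m - 1 - (i : ℕ)) with hc
  have hk : (c : ℝ) = (b : ℝ) ^ m * a := by
    rw [hc, ha, Finset.mul_sum]
    push_cast
    refine Finset.sum_congr rfl fun i _ => ?_
    have hpow : (b : ℝ) ^ ((i : ℕ) + 1) * (b : ℝ) ^ (m - 1 - (i : ℕ)) = (b : ℝ) ^ m := by
      rw [← pow_add]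
      congr 1
      have := i.isLt
      omega
    field_simp
    linear_combination ((w i : ℕ) : ℝ) * hpow
  set D : ℝ := (b : ℝ) ^ m - 1 with hDdef
  have hD : 0 < D := by simp only [hDdef]; linarith
  have hsub : badicEset b t m w ⊆ Set.Ioo (((c : ℝ) - r) / D) (((c : ℝ) + r) / D) := by
    rintro x ⟨⟨hx1, hx2⟩, hx3⟩
    have hit : (fun y : ℝ => Int.fract ((b : ℝ) * y))^[m] x = Int.fract ((b : ℝ) ^ m * x) := by
      obtain ⟨m', rfl⟩ : ∃ m', m = m' + 1 := ⟨m - 1, by omega⟩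
      rw [Function.iterate_succ_apply]
      rw [fract_iterate b m' ((b : ℝ) * x)]
      congr 1
      ring
    have hfr : Int.fract ((b : ℝ) ^ m * x) = (b : ℝ) ^ m * x - (c : ℝ) := by
      rw [show Int.fract ((b : ℝ) ^ m * x) = Int.fract ((b : ℝ) ^ m * x - (c : ℝ)) from
        (Int.fract_sub_intCast _ _).symm, Int.fract_eq_self]
      constructor
      · have : (c : ℝ) ≤ (b : ℝ) ^ m * x := by
          rw [hk]
          exact mul_le_mul_of_nonneg_left hx1 (by positivity)
        linarith
      · have h2 : (b : ℝ) ^ m * x < (b : ℝ) ^ m * (a + ((b : ℝ) ^ m)⁻¹) :=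
          mul_lt_mul_of_pos_left hx2 (by positivity)
        rw [mul_add, mul_inv_cancel₀ (by positivity), ← hk] at h2
        linarith
    rw [hit, hfr] at hx3
    have habs : |D * x - (c : ℝ)| < r := by
      have : (b : ℝ) ^ m * x - (c : ℝ) - x = D * x - (c : ℝ) := by rw [hDdef]; ring
      rwa [this] at hx3
    rw [abs_lt] at habs
    constructor
    · rw [div_lt_iff₀ hD]; linarith
    · rw [lt_div_iff₀ hD]; linarith
  calc EMetric.diam (badicEset b t m w) ≤ EMetric.diam (Set.Ioo (((c:ℝ)-r)/D) (((c:ℝ)+r)/D)) :=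
        EMetric.diam_mono hsub
    _ = ENNReal.ofReal (((c:ℝ)+r)/D - ((c:ℝ)-r)/D) := Real.ediam_Ioo _ _
    _ ≤ ENNReal.ofReal (4 * (b : ℝ) ^ (-(1 + t) * (m : ℝ))) := ENNReal.ofReal_le_ofReal (by
    have hkey : (b : ℝ) ^ (-(1 + t) * (m : ℝ)) = r * ((b : ℝ) ^ m)⁻¹ := by
      rw [hrdef, ← Real.rpow_natCast (b : ℝ) m, ← Real.rpow_neg hb0.le, ← Real.rpow_add hb0]
      congr 1
      ring
    rw [hkey]
    rw [div_sub_div_same]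
    have h1 : ((c : ℝ) + r - ((c : ℝ) - r)) = 2 * r := by ring
    rw [h1, div_le_iff₀ hD]
    have h2 : ((b:ℝ)^m)⁻¹ * (b:ℝ)^m = 1 := inv_mul_cancel₀ (by positivity)
    nlinarith [mul_pos hr (sub_pos.mpr (show (1:ℝ) < (b:ℝ)^m by linarith))])

lemma badicEset_cast (b : ℕ) (t : ℝ) {m n : ℕ} (h : m = n) (w : Fin n → Fin b) :
    badicEset b t m (fun i => w (Fin.cast h i)) = badicEset b t n w := by subst h; rfl

lemma badicR2_eq (b : ℕ) (t : ℝ) :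
    (⋂ N : ℕ, ⋃ (n : ℕ) (_ : N ≤ n) (w : Fin n → Fin b),
      {x ∈ badicCyl b n w |
        |(fun y : ℝ => Int.fract ((b : ℝ) * y))^[n] x - x| < (b : ℝ) ^ (-(t * (n : ℝ)))}) =
    ⋂ N : ℕ, ⋃ (n : ℕ) (_ : N ≤ n) (w : Fin n → Fin b), badicEset b t n w := rfl

theorem badicR2_measure_zero (b : ℕ) (hb : 2 ≤ b) (t : ℝ) (ht : 0 ≤ t) (s : ℝ) (hs : 1 / (1 + t) < s) :
    μH[s] (⋂ N : ℕ, ⋃ (n : ℕ) (_ : N ≤ n) (w : Fin n → Fin b), badicEset b t n w) = 0 := by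
  set R := ⋂ N : ℕ, ⋃ (n : ℕ) (_ : N ≤ n) (w : Fin n → Fin b), badicEset b t n w with hR
  have hb0 : (0 : ℝ) < b := by positivity
  have hb1 : (1 : ℝ) < b := by exact_mod_cast hb
  have h1t : (0 : ℝ) < 1 + t := by linarith
  have hs0 : 0 < s := lt_trans (by positivity) hs
  have hlt : 1 < s * (1 + t) := by
    rw [div_lt_iff₀ h1t] at hs; linarith
  set ρ : ℝ := (b : ℝ) ^ (1 - s * (1 + t)) with hρdef
  have hρ0 : 0 < ρ := Real.rpow_pos_of_pos hb0 _
  have hρ1 : ρ < 1 := Real.rpow_lt_one_of_one_lt_of_neg hb1 (by linarith)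
  set q : ℝ≥0∞ := ENNReal.ofReal ρ with hqdef
  have hq1 : q < 1 := by
    rw [hqdef, ← ENNReal.ofReal_one]
    exact ENNReal.ofReal_lt_ofReal_iff_of_nonneg hρ0.le |>.mpr hρ1
  set C : ℝ≥0∞ := ENNReal.ofReal ((4 : ℝ) ^ s) with hCdef
  -- per-m tsum bound
  have hsum : ∀ m : ℕ, 1 ≤ m →
      ∑' w : Fin m → Fin b, EMetric.diam (badicEset b t m w) ^ s ≤ C * q ^ m := by
    intro m hm
    have hX : (0 : ℝ) < 4 * (b : ℝ) ^ (-(1 + t) * (m : ℝ)) := by positivity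
    have hterm : ∀ w : Fin m → Fin b, EMetric.diam (badicEset b t m w) ^ s ≤
        ENNReal.ofReal ((4 * (b : ℝ) ^ (-(1 + t) * (m : ℝ))) ^ s) := by
      intro w
      calc EMetric.diam (badicEset b t m w) ^ s
          ≤ (ENNReal.ofReal (4 * (b : ℝ) ^ (-(1 + t) * (m : ℝ)))) ^ s :=
            ENNReal.rpow_le_rpow (badicEset_diam b hb t ht m hm w) hs0.le
        _ = ENNReal.ofReal ((4 * (b : ℝ) ^ (-(1 + t) * (m : ℝ))) ^ s) :=
            ENNReal.ofReal_rpow_of_pos hX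
    calc ∑' w : Fin m → Fin b, EMetric.diam (badicEset b t m w) ^ s
        ≤ ∑' _w : Fin m → Fin b, ENNReal.ofReal ((4 * (b : ℝ) ^ (-(1 + t) * (m : ℝ))) ^ s) :=
          ENNReal.tsum_le_tsum hterm
      _ = (Fintype.card (Fin m → Fin b)) *
            ENNReal.ofReal ((4 * (b : ℝ) ^ (-(1 + t) * (m : ℝ))) ^ s) := by
          rw [tsum_fintype, Finset.sum_const, Finset.card_univ, nsmul_eq_mul]
      _ = C * q ^ m := by
          rw [Fintype.card_fun, Fintype.card_fin, Fintype.card_fin]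
          rw [hCdef, hqdef, ← ENNReal.ofReal_pow hρ0.le, ← ENNReal.ofReal_mul (by positivity)]
          rw [show ((b ^ m : ℕ) : ℝ≥0∞) = ENNReal.ofReal ((b : ℝ) ^ m) by
            rw [← ENNReal.ofReal_natCast]; push_cast; ring_nf]
          rw [← ENNReal.ofReal_mul (by positivity)]
          congr 1
          rw [Real.mul_rpow (by norm_num) (Real.rpow_nonneg hb0.le _),
            ← Real.rpow_mul hb0.le, hρdef, ← Real.rpow_natCast ((b:ℝ) ^ (1 - s*(1+t))) m,
            ← Real.rpow_mul hb0.le, ← Real.rpow_natCast (b : ℝ) m]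
          rw [show (b:ℝ) ^ (m:ℝ) * ((4:ℝ) ^ s * (b:ℝ) ^ (-(1 + t) * (m:ℝ) * s)) =
            (4:ℝ) ^ s * ((b:ℝ) ^ (m:ℝ) * (b:ℝ) ^ (-(1 + t) * (m:ℝ) * s)) by ring,
            ← Real.rpow_add hb0]
          congr 1
          ring
  -- the geometric parameter for the diameters
  set ρ₀ : ℝ := (b : ℝ) ^ (-(1 + t)) with hρ₀def
  have hρ₀0 : 0 < ρ₀ := Real.rpow_pos_of_pos hb0 _
  have hρ₀1 : ρ₀ < 1 := Real.rpow_lt_one_of_one_lt_of_neg hb1 (by linarith)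
  have hr : Tendsto (fun N : ℕ => ENNReal.ofReal (4 * ρ₀ ^ N)) atTop (𝓝 0) := by
    have h0 : Tendsto (fun N : ℕ => 4 * ρ₀ ^ N) atTop (𝓝 0) := by
      simpa using (tendsto_pow_atTop_nhds_zero_of_lt_one hρ₀0.le hρ₀1).const_mul (4 : ℝ)
    simpa using ENNReal.tendsto_ofReal h0
  have hdiam : ∀ᶠ N : ℕ in atTop, ∀ i : Σ k : ℕ, (Fin (k + N) → Fin b),
      EMetric.diam (badicEset b t (i.1 + N) i.2) ≤ ENNReal.ofReal (4 * ρ₀ ^ N) := by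
    filter_upwards [eventually_ge_atTop 1] with N hN
    rintro ⟨k, w⟩
    refine le_trans (badicEset_diam b hb t ht (k + N) (by omega) w)
      (ENNReal.ofReal_le_ofReal ?_)
    have h1 : (b : ℝ) ^ (-(1 + t) * ((k + N : ℕ) : ℝ)) = ρ₀ ^ (k + N) := by
      rw [Real.rpow_mul hb0.le, ← hρ₀def, Real.rpow_natCast]
    rw [h1]
    have h2 : ρ₀ ^ (k + N) ≤ ρ₀ ^ N := pow_le_pow_of_le_one hρ₀0.le hρ₀1.le (by omega)
    linarith
  have hcov : ∀ᶠ N : ℕ in atTop, R ⊆ ⋃ i : Σ k : ℕ, (Fin (k + N) → Fin b),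
      badicEset b t (i.1 + N) i.2 := by
    refine Eventually.of_forall fun N x hx => ?_
    have hx' := Set.mem_iInter.mp hx N
    simp only [Set.mem_iUnion] at hx'
    obtain ⟨n, hn, w, hxw⟩ := hx'
    have hnn : n - N + N = n := by omega
    refine Set.mem_iUnion.mpr ⟨⟨n - N, fun i => w (Fin.cast hnn i)⟩, ?_⟩
    show x ∈ badicEset b t (n - N + N) (fun i => w (Fin.cast hnn i))
    rw [badicEset_cast b t hnn w]
    exact hxw
  have hmain := MeasureTheory.Measure.hausdorffMeasure_le_liminf_tsum (ι := fun N : ℕ => Σ k : ℕ, (Fin (k + N) → Fin b))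
    s R (l := atTop) (fun N => ENNReal.ofReal (4 * ρ₀ ^ N)) hr
    (fun N i => badicEset b t (i.1 + N) i.2) hdiam hcov
  -- bound the liminf
  have hq0ne : (1 : ℝ≥0∞) - q ≠ 0 := by
    simpa using (tsub_pos_of_lt hq1).ne'
  have hKne : C * (1 - q)⁻¹ ≠ ⊤ :=
    ENNReal.mul_ne_top ENNReal.ofReal_ne_top (ENNReal.inv_ne_top.mpr hq0ne)
  have hSle : ∀ᶠ N : ℕ in atTop,
      (∑' i : Σ k : ℕ, (Fin (k + N) → Fin b), EMetric.diam (badicEset b t (i.1 + N) i.2) ^ s)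
        ≤ (C * (1 - q)⁻¹) * q ^ N := by
    filter_upwards [eventually_ge_atTop 1] with N hN
    calc (∑' i : Σ k : ℕ, (Fin (k + N) → Fin b), EMetric.diam (badicEset b t (i.1 + N) i.2) ^ s)
        = ∑' k : ℕ, ∑' w : Fin (k + N) → Fin b, EMetric.diam (badicEset b t (k + N) w) ^ s :=
          ENNReal.tsum_sigma' _
      _ ≤ ∑' k : ℕ, C * q ^ (k + N) :=
          ENNReal.tsum_le_tsum fun k => hsum (k + N) (by omega)
      _ = (C * (1 - q)⁻¹) * q ^ N := by
          simp only [pow_add]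
          calc ∑' k : ℕ, C * (q ^ k * q ^ N) = ∑' k : ℕ, (C * q ^ N) * q ^ k :=
                tsum_congr fun k => by ring
            _ = (C * q ^ N) * ∑' k : ℕ, q ^ k := ENNReal.tsum_mul_left
            _ = (C * (1 - q)⁻¹) * q ^ N := by rw [ENNReal.tsum_geometric]; ring
  have hq0 : Tendsto (fun N : ℕ => q ^ N) atTop (𝓝 0) :=
    ENNReal.tendsto_pow_atTop_nhds_zero_of_lt_one hq1
  have hB : Tendsto (fun N : ℕ => (C * (1 - q)⁻¹) * q ^ N) atTop (𝓝 0) := by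
    simpa using ENNReal.Tendsto.const_mul hq0 (Or.inr hKne)
  refine le_antisymm ?_ zero_le
  refine le_trans hmain (le_trans (liminf_le_liminf hSle) ?_)
  rw [hB.liminf_eq]


/-- For every `s > 1/(1+t)`, the `s`-dimensional Hausdorff measure of
`R₂(t)` vanishes; hence `dim_H R₂(t) ≤ 1/(1+t)`. -/
theorem badic_R2_hausdorff_upper (b : ℕ) (hb : 2 ≤ b) (t : ℝ) (ht : 0 ≤ t) :
    (∀ s : ℝ, 1 / (1 + t) < s → μH[s] (badicR2 b t) = 0) ∧
    dimH (badicR2 b t) ≤ ENNReal.ofReal (1 / (1 + t)) := by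
  have key : ∀ s : ℝ, 1 / (1 + t) < s → μH[s] (badicR2 b t) = 0 := fun s hs =>
    badicR2_measure_zero b hb t ht s hs
  refine ⟨key, ?_⟩
  refine dimH_le fun d' hd' => ?_
  by_contra hcon
  push_neg at hcon
  have h1t : (0 : ℝ) < 1 + t := by linarith
  rw [← ENNReal.ofReal_coe_nnreal] at hcon
  have hd : 1 / (1 + t) < (d' : ℝ) :=
    (ENNReal.ofReal_lt_ofReal_iff_of_nonneg (by positivity)).mp hcon
  rw [key (d' : ℝ) hd] at hd'
  simp at hd'
end

section
/- Let T be the Gauss map on [0,1] and x ∈ I_n(a_1,...,a_n) a point in the continued-fraction cylinder of (a_1,...,a_n), with q_n = q_n(a_1,...,a_n) the denominator of the convergent [a_1,...,a_n]. Let x₀ = [(a_1,...,a_n)^∞] be the purely periodic quadratic number with period (a_1,...,a_n). If |T^n x − x| < (1/2) q_n^{-2τ} then |x − x₀| ≤ q_n^{-2(1+τ)}, where T^n x denotes the n-th iterate along the coding (a_1,...,a_n). -/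
/-- The Gauss map `x ↦ {1/x}`. -/
noncomputable def gaussMap (x : ℝ) : ℝ := Int.fract x⁻¹

/-- The `k`-th continued fraction digit of `x` (0-indexed): `a_{k+1}(x) = ⌊1/G^k x⌋`. -/
noncomputable def cfDigit (k : ℕ) (x : ℝ) : ℕ := (⌊(gaussMap^[k] x)⁻¹⌋).toNat

/-- The denominator `q_n` of the convergent `[a_1, …, a_n]`, via the continuant recursion
`q_{-1} = 0`, `q_0 = 1`, `q_k = a_k q_{k-1} + q_{k-2}`. -/
def contDenom (l : List ℕ) : ℕ :=
  (l.foldl (fun pq a => (pq.2, a * pq.2 + pq.1)) ((0 : ℕ), (1 : ℕ))).2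

namespace CFaux

/-- matrix (A B; C D) = A(a₁)⋯A(aₙ), as (A,B,C,D) -/
def cfm : List ℕ → ℕ × ℕ × ℕ × ℕ
  | [] => (1, 0, 0, 1)
  | a :: l =>
    (a * (cfm l).1 + (cfm l).2.2.1, a * (cfm l).2.1 + (cfm l).2.2.2,
      (cfm l).1, (cfm l).2.1)

lemma cfm_det (l : List ℕ) :
    ((cfm l).1 : ℤ) * (cfm l).2.2.2 - (cfm l).2.1 * (cfm l).2.2.1 = (-1) ^ l.length := by
  induction l with
  | nil => simp [cfm]
  | cons a l ih =>
      simp only [cfm, List.length_cons, pow_succ]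
      push_cast
      linear_combination (-1 : ℤ) * ih

lemma cfm_append (l : List ℕ) (a : ℕ) :
    cfm (l ++ [a]) = (a * (cfm l).1 + (cfm l).2.1, (cfm l).1,
      a * (cfm l).2.2.1 + (cfm l).2.2.2, (cfm l).2.2.1) := by
  induction l with
  | nil => simp [cfm]
  | cons b l ih =>
      rcases hM : cfm l with ⟨A, B, C, D⟩
      have h2 : cfm (l ++ [a]) = (a * A + B, A, a * C + D, C) := by
        rw [ih, hM]
      rw [List.cons_append]
      simp only [cfm, h2, hM, Prod.mk.injEq]
      ring_nf
      trivial

lemma contDenom_eq (l : List ℕ) :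
    l.foldl (fun pq a => (pq.2, a * pq.2 + pq.1)) ((0 : ℕ), (1 : ℕ))
      = ((cfm l).2.1, (cfm l).1) := by
  induction l using List.reverseRecOn with
  | nil => simp [cfm]
  | append_singleton l a ih =>
      rw [List.foldl_append, ih, cfm_append]
      simp [Nat.mul_comm]

lemma cfm_mono (l : List ℕ) (hne : l ≠ []) (hb : ∀ b ∈ l, 1 ≤ b) :
    (cfm l).2.1 ≤ (cfm l).1 ∧ (cfm l).2.2.2 ≤ (cfm l).2.2.1 ∧ 1 ≤ (cfm l).1 := by
  induction l with
  | nil => simp at hne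
  | cons a l ih =>
      rcases eq_or_ne l [] with rfl | hl
      · have := hb a (by simp)
        simp [cfm]
        omega
      · obtain ⟨h1, h2, h3⟩ := ih hl (fun b hbl => hb b (by simp [hbl]))
        have ha1 : 1 ≤ a := hb a (by simp)
        simp only [cfm]
        refine ⟨?_, h1, ?_⟩
        · exact Nat.add_le_add (Nat.mul_le_mul_left a h1) h2
        · nlinarith

lemma key (l : List ℕ) : ∀ (y : ℝ), 0 ≤ y → y < 1 → (∀ b ∈ l, 1 ≤ b) →
    (∀ k, k < l.length → cfDigit k y = l.getD k 0) →
    (0 ≤ gaussMap^[l.length] y ∧ gaussMap^[l.length] y < 1) ∧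
      y * ((cfm l).1 + (cfm l).2.1 * gaussMap^[l.length] y)
        = (cfm l).2.2.1 + (cfm l).2.2.2 * gaussMap^[l.length] y := by
  induction l with
  | nil =>
      intro y hy0 hy1 _ _
      refine ⟨⟨by simpa using hy0, by simpa using hy1⟩, ?_⟩
      simp [cfm]
  | cons a l ih =>
      intro y hy0 hy1 hb hd
      have ha1 : 1 ≤ a := hb a (by simp)
      have h0 : (⌊y⁻¹⌋).toNat = a := by
        have := hd 0 (by simp)
        simpa [cfDigit] using this
      have hyne : y ≠ 0 := by
        intro hy
        subst hy
        simp at h0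
        omega
      have hfloor : ⌊y⁻¹⌋ = (a : ℤ) := by omega
      have hg : gaussMap y = y⁻¹ - a := by
        simp [gaussMap, Int.fract, hfloor]
      have hy'0 : 0 ≤ gaussMap y := Int.fract_nonneg _
      have hy'1 : gaussMap y < 1 := Int.fract_lt_one _
      have hd' : ∀ k, k < l.length → cfDigit k (gaussMap y) = l.getD k 0 := by
        intro k hk
        have := hd (k + 1) (by simpa using Nat.succ_lt_succ hk)
        simpa [cfDigit, Function.iterate_succ_apply] using this
      obtain ⟨⟨ht0, ht1⟩, hid⟩ := ih (gaussMap y) hy'0 hy'1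
        (fun b hbl => hb b (by simp [hbl])) hd'
      have hiter : gaussMap^[(a :: l).length] y = gaussMap^[l.length] (gaussMap y) := by
        simp [Function.iterate_succ_apply]
      set t := gaussMap^[l.length] (gaussMap y) with htdef
      have h1 : y * ((a : ℝ) + gaussMap y) = 1 := by
        have heq : y * ((a : ℝ) + (y⁻¹ - a)) = y * y⁻¹ := by ring
        rw [hg, heq, mul_inv_cancel₀ hyne]
      constructor
      · rw [hiter]; exact ⟨ht0, ht1⟩
      · rw [hiter]
        simp only [cfm]
        push_cast
        linear_combination ((cfm l).1 + (cfm l).2.1 * t) * h1 - y * hid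

end CFaux
set_option maxHeartbeats 1600000 in
/-- Let `x` be in the continued-fraction cylinder `I_n(a_1,…,a_n)` of the Gauss
map `T`, `q_n` the denominator of `[a_1,…,a_n]`, and `x₀ = [(a_1,…,a_n)^∞]` the purely
periodic point of the cylinder. If `|T^n x − x| < (1/2) q_n^{-2τ}` then
`|x − x₀| ≤ q_n^{-2(1+τ)}`. -/
theorem cf_periodic_approximation (n : ℕ) (hn : 1 ≤ n) (a : Fin n → ℕ)
    (ha : ∀ k, 1 ≤ a k) (τ : ℝ) (x x₀ : ℝ)
    (hx : x ∈ Set.Ioo (0 : ℝ) 1 ∧ ∀ k : Fin n, cfDigit k x = a k)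
    (hx₀mem : x₀ ∈ Set.Ioo (0 : ℝ) 1 ∧ ∀ k : Fin n, cfDigit k x₀ = a k)
    (hx₀per : gaussMap^[n] x₀ = x₀)
    (h : |gaussMap^[n] x - x| <
      (1 / 2) * (contDenom (List.ofFn a) : ℝ) ^ (-(2 * τ))) :
    |x - x₀| ≤ (contDenom (List.ofFn a) : ℝ) ^ (-(2 * (1 + τ))) := by
  obtain ⟨⟨hx0, hx1⟩, hxd⟩ := hx
  obtain ⟨⟨hx₀0, hx₀1⟩, hx₀d⟩ := hx₀mem
  set l := List.ofFn a with hl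
  have hlen : l.length = n := List.length_ofFn
  have hb : ∀ b ∈ l, 1 ≤ b := by
    intro b hbl
    obtain ⟨i, hi⟩ := List.mem_ofFn.mp hbl
    rw [← hi]; exact ha i
  have hgetD : ∀ k, ∀ hk : k < l.length, l.getD k 0 = a ⟨k, hlen ▸ hk⟩ := by
    intro k hk
    rw [List.getD_eq_getElem l 0 hk]
    simp [hl]
  have hxd' : ∀ k, k < l.length → cfDigit k x = l.getD k 0 := by
    intro k hk
    rw [hgetD k hk]
    exact hxd ⟨k, hlen ▸ hk⟩
  have hx₀d' : ∀ k, k < l.length → cfDigit k x₀ = l.getD k 0 := by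
    intro k hk
    rw [hgetD k hk]
    exact hx₀d ⟨k, hlen ▸ hk⟩
  obtain ⟨⟨ht0, _⟩, hidx⟩ := CFaux.key l x (le_of_lt hx0) hx1 hb hxd'
  obtain ⟨_, hidx₀⟩ := CFaux.key l x₀ (le_of_lt hx₀0) hx₀1 hb hx₀d'
  rw [hlen] at hidx hidx₀ ht0
  rw [hx₀per] at hidx₀
  have hq : contDenom l = (CFaux.cfm l).1 := by
    unfold contDenom
    rw [CFaux.contDenom_eq]
  have hdet := CFaux.cfm_det l
  have hmono := CFaux.cfm_mono l (by intro hcon; rw [hcon] at hlen; simp at hlen; omega) hb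
  rcases hM : CFaux.cfm l with ⟨A, B, C, D⟩
  rw [hM] at hidx hidx₀ hq hdet hmono
  obtain ⟨hBA, -, h1A⟩ := hmono
  replace hBA : B ≤ A := hBA
  replace h1A : 1 ≤ A := h1A
  simp only at hidx hidx₀ hdet hq
  set t := gaussMap^[n] x with htdef
  -- determinant is ±1
  have hε : ((A : ℝ) * D - B * C = 1) ∨ ((A : ℝ) * D - B * C = -1) := by
    rcases neg_one_pow_eq_or ℤ l.length with hp | hp <;> rw [hp] at hdet
    · left; exact_mod_cast hdet
    · right; exact_mod_cast hdet
  -- key Möbius identity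
  have keyid : ((A : ℝ) + B * t) * ((A : ℝ) + B * x₀) * (x - x₀)
      = ((A : ℝ) * D - B * C) * (t - x₀) := by
    linear_combination ((A : ℝ) + B * x₀) * hidx - ((A : ℝ) + B * t) * hidx₀
  have hP1 : (0 : ℝ) ≤ (A : ℝ) + B * t :=
    add_nonneg (by positivity) (mul_nonneg (by positivity) ht0)
  have hP2 : (0 : ℝ) ≤ (A : ℝ) + B * x₀ :=
    add_nonneg (by positivity) (mul_nonneg (by positivity) (le_of_lt hx₀0))
  have habs : ((A : ℝ) + B * t) * ((A : ℝ) + B * x₀) * |x - x₀| = |t - x₀| := by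
    have h3 : |((A : ℝ) + B * t) * ((A : ℝ) + B * x₀) * (x - x₀)| = |t - x₀| := by
      rw [keyid]
      rcases hε with hε | hε <;> rw [hε]
      · rw [one_mul]
      · rw [neg_one_mul, abs_neg]
    rwa [abs_mul, abs_of_nonneg (mul_nonneg hP1 hP2)] at h3
  have hA1 : (A : ℝ) ≤ (A : ℝ) + B * t := by nlinarith [ht0]
  have hA2 : (A : ℝ) ≤ (A : ℝ) + B * x₀ := by nlinarith [le_of_lt hx₀0]
  have hA0 : (0 : ℝ) ≤ (A : ℝ) := by positivity
  have hprod : (A : ℝ) * A ≤ ((A : ℝ) + B * t) * ((A : ℝ) + B * x₀) :=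
    mul_le_mul hA1 hA2 hA0 hP1
  have hlow : (A : ℝ) ^ 2 * |x - x₀| ≤ |t - x₀| := by
    calc (A : ℝ) ^ 2 * |x - x₀| = (A : ℝ) * A * |x - x₀| := by ring
      _ ≤ ((A : ℝ) + B * t) * ((A : ℝ) + B * x₀) * |x - x₀| :=
          mul_le_mul_of_nonneg_right hprod (abs_nonneg _)
      _ = |t - x₀| := habs
  have htri : |t - x₀| ≤ |t - x| + |x - x₀| := abs_sub_le t x x₀
  have hmain : ((A : ℝ) ^ 2 - 1) * |x - x₀| ≤ |t - x| := by nlinarith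
  rw [hq] at h ⊢
  clear_value t l
  clear htdef hl hxd hx₀d hxd' hx₀d' hgetD hidx hidx₀ keyid habs hM hdet hε
  rcases eq_or_lt_of_le h1A with hA1' | hA2'
  · -- A = 1, trivial case
    rw [← hA1']
    push_cast
    rw [Real.one_rpow]
    apply le_of_lt
    rw [abs_sub_lt_iff]
    constructor <;> linarith
  · -- A ≥ 2
    have hA2n : 2 ≤ A := hA2'
    have hc2 : (2 : ℝ) ≤ (A : ℝ) := by exact_mod_cast hA2n
    have hc0 : (0 : ℝ) < (A : ℝ) := by linarith
    have hupos : 0 < (A : ℝ) ^ (-(2 * τ)) := Real.rpow_pos_of_pos hc0 _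
    have hsplit : (A : ℝ) ^ (-(2 * (1 + τ)))
        = ((A : ℝ) ^ 2)⁻¹ * (A : ℝ) ^ (-(2 * τ)) := by
      rw [show -(2 * (1 + τ)) = -((2:ℕ):ℝ) + -(2 * τ) by push_cast; ring,
        Real.rpow_add hc0, Real.rpow_neg (le_of_lt hc0), Real.rpow_natCast]
    rw [hsplit]
    have hd0 : 0 ≤ |x - x₀| := abs_nonneg _
    have hc4 : (4 : ℝ) ≤ (A : ℝ) ^ 2 := by nlinarith
    have hckey : |x - x₀| * (A : ℝ) ^ 2 ≤ (A : ℝ) ^ (-(2 * τ)) := by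
      nlinarith [mul_nonneg hd0 (by linarith : (0 : ℝ) ≤ (A : ℝ) ^ 2 - 2)]
    rw [inv_mul_eq_div, le_div_iff₀ (by positivity)]
    exact hckey
end
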